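/- Let f ∈ ℚ[u, z] be a polynomial in two variables, and let m be a natural number. Then the coefficient of r^m in f(ur+2, zr+2) + f(ur−2, zr−2) − 2 f(ur, zr) equals ∑_{k ≥ m+2, k ≡ m (mod 2)} 2^{1+k−m} ∑_{p+q=k} φ_{p,q,m}(u,z) · c_{p,q}, where c_{p,q} is the coefficient of u^p z^q in f(u,z) and φ_{p,q,m}(u,z) := ∑_{i+j=m, i≤p, j≤q} C(p,i) C(q,j) u^i z^j. -/

import Mathlib

open Finset

/-- The polynomial `φ_{p,q,m}(u,z) = ∑_{i+j=m, i≤p, j≤q} C(p,i) C(q,j) u^i z^j`,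
with `u = X 0`, `z = X 1` (the conditions `i ≤ p`, `j ≤ q` are enforced by the
vanishing of the binomial coefficients). -/
noncomputable def phiPoly (p q m : ℕ) : MvPolynomial (Fin 2) ℚ :=
  ∑ ij ∈ Finset.HasAntidiagonal.antidiagonal m,
    MvPolynomial.C ((p.choose ij.1 : ℚ) * (q.choose ij.2 : ℚ))
      * MvPolynomial.X 0 ^ ij.1 * MvPolynomial.X 1 ^ ij.2

namespace CoeffExtractAux

abbrev R2 := MvPolynomial (Fin 2) ℚ

lemma coeff_linPow {S : Type*} [CommSemiring S] (a b : S) (p i : ℕ) :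
    ((Polynomial.C a * Polynomial.X + Polynomial.C b) ^ p).coeff i
      = (p.choose i : S) * a ^ i * b ^ (p - i) := by
  rw [add_pow, Polynomial.finset_sum_coeff]
  have h : ∀ k, ((Polynomial.C a * Polynomial.X) ^ k * Polynomial.C b ^ (p - k)
      * (p.choose k : Polynomial S)).coeff i
      = if i = k then (p.choose k : S) * a ^ k * b ^ (p - k) else 0 := by
    intro k
    have : (Polynomial.C a * Polynomial.X) ^ k * Polynomial.C b ^ (p - k)
        * (p.choose k : Polynomial S)
        = Polynomial.C ((p.choose k : S) * a ^ k * b ^ (p - k)) * Polynomial.X ^ k := by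
      rw [mul_pow, ← Polynomial.C_pow, ← Polynomial.C_pow, ← Polynomial.C_eq_natCast]
      conv_rhs => rw [map_mul, map_mul]
      ring
    rw [this, Polynomial.coeff_C_mul, Polynomial.coeff_X_pow]
    split_ifs <;> simp
  simp only [h]
  rw [Finset.sum_ite_eq (Finset.range (p + 1)) i]
  split_ifs with hi
  · rfl
  · simp only [Finset.mem_range, not_lt] at hi
    rw [Nat.choose_eq_zero_of_lt (by omega : p < i)]
    simp

lemma single_apply0 (p q : ℕ) :
    ((Finsupp.single (0 : Fin 2) p + Finsupp.single 1 q : Fin 2 →₀ ℕ)) 0 = p := by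
  simp [Finsupp.single_apply]

lemma single_apply1 (p q : ℕ) :
    ((Finsupp.single (0 : Fin 2) p + Finsupp.single 1 q : Fin 2 →₀ ℕ)) 1 = q := by
  simp [Finsupp.single_apply]

lemma fin2_decomp (d : Fin 2 →₀ ℕ) :
    d = Finsupp.single 0 (d 0) + Finsupp.single 1 (d 1) := by
  ext x
  fin_cases x <;> simp [Finsupp.single_apply]

lemma single_inj {p q p' q' : ℕ}
    (h : Finsupp.single (0 : Fin 2) p + Finsupp.single 1 q
       = Finsupp.single (0 : Fin 2) p' + Finsupp.single 1 q') : p = p' ∧ q = q' := by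
  constructor
  · have := congrArg (fun g : Fin 2 →₀ ℕ => g 0) h
    simpa [single_apply0] using this
  · have := congrArg (fun g : Fin 2 →₀ ℕ => g 1) h
    simpa [single_apply1] using this

lemma degree_sum_eq (p q : ℕ) :
    ((Finsupp.single (0 : Fin 2) p + Finsupp.single 1 q).sum fun _ e => e) = p + q := by
  rw [Finsupp.sum_fintype _ _ (fun _ => rfl), Fin.sum_univ_two, single_apply0, single_apply1]

lemma aeval_mono (b : R2) (p q : ℕ) (c : ℚ) :
    MvPolynomial.aeval ![Polynomial.C (MvPolynomial.X 0) * Polynomial.X + Polynomial.C b,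
        Polynomial.C (MvPolynomial.X 1) * Polynomial.X + Polynomial.C b]
      (MvPolynomial.monomial (Finsupp.single 0 p + Finsupp.single 1 q) c)
    = Polynomial.C (MvPolynomial.C c)
      * ((Polynomial.C (MvPolynomial.X 0) * Polynomial.X + Polynomial.C b) ^ p
      * ((Polynomial.C (MvPolynomial.X 1) * Polynomial.X + Polynomial.C b) ^ q)) := by
  rw [MvPolynomial.aeval_monomial,
    Finsupp.prod_fintype _ _ (fun _ => pow_zero _), Fin.prod_univ_two,
    single_apply0, single_apply1]
  simp only [Matrix.cons_val_zero, Matrix.cons_val_one, Matrix.head_cons, mul_assoc]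
  rw [show (algebraMap ℚ (Polynomial R2)) c = Polynomial.C (MvPolynomial.C c) by
    rw [Polynomial.algebraMap_apply, MvPolynomial.algebraMap_eq]]

lemma coeff_mul_linPow (b : R2) (p q m : ℕ) :
    (((Polynomial.C (MvPolynomial.X 0) * Polynomial.X + Polynomial.C b) ^ p
      * ((Polynomial.C (MvPolynomial.X 1) * Polynomial.X + Polynomial.C b) ^ q)).coeff m)
    = ∑ ij ∈ antidiagonal m,
        MvPolynomial.C ((p.choose ij.1 : ℚ) * (q.choose ij.2 : ℚ))
          * MvPolynomial.X 0 ^ ij.1 * MvPolynomial.X 1 ^ ij.2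
          * b ^ (p - ij.1 + (q - ij.2)) := by
  rw [Polynomial.coeff_mul]
  refine Finset.sum_congr rfl fun ij _ => ?_
  rw [coeff_linPow, coeff_linPow, pow_add, map_mul, map_natCast, map_natCast]
  ring

lemma mono_eval (p q m : ℕ) :
    ∑ ij ∈ antidiagonal m,
        MvPolynomial.C ((p.choose ij.1 : ℚ) * (q.choose ij.2 : ℚ))
          * MvPolynomial.X 0 ^ ij.1 * MvPolynomial.X 1 ^ ij.2
          * ((2 : R2) ^ (p - ij.1 + (q - ij.2)) + (-2 : R2) ^ (p - ij.1 + (q - ij.2))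
              - 2 * (0 : R2) ^ (p - ij.1 + (q - ij.2)))
    = if m + 2 ≤ p + q ∧ Even (p + q - m) then
        MvPolynomial.C ((2 : ℚ) ^ (1 + (p + q) - m)) * phiPoly p q m
      else 0 := by
  split_ifs with h
  · rw [phiPoly, Finset.mul_sum]
    refine Finset.sum_congr rfl fun ij hij => ?_
    have hm : ij.1 + ij.2 = m := Finset.HasAntidiagonal.mem_antidiagonal.mp hij
    by_cases hle : ij.1 ≤ p ∧ ij.2 ≤ q
    · have he : p - ij.1 + (q - ij.2) = p + q - m := by omega
      have he2 : 1 + (p + q) - m = (p + q - m) + 1 := by omega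
      rw [he, he2]
      have hne : p + q - m ≠ 0 := by omega
      have heven : Even (p + q - m) := h.2
      rw [zero_pow hne, heven.neg_pow]
      rw [map_pow]
      have h2 : MvPolynomial.C (2 : ℚ) = (2 : R2) := by
        rw [map_ofNat]
      rw [h2]
      ring
    · rcases not_and_or.mp hle with hlt | hlt
      · rw [Nat.choose_eq_zero_of_lt (show p < ij.1 by omega)]
        simp
      · rw [Nat.choose_eq_zero_of_lt (show q < ij.2 by omega)]
        simp
  · refine Finset.sum_eq_zero fun ij hij => ?_
    have hm : ij.1 + ij.2 = m := Finset.HasAntidiagonal.mem_antidiagonal.mp hij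
    by_cases hle : ij.1 ≤ p ∧ ij.2 ≤ q
    · have he : p - ij.1 + (q - ij.2) = p + q - m := by omega
      rw [he]
      have : p + q - m = 0 ∨ Odd (p + q - m) := by
        by_contra hcon
        push_neg at hcon
        rw [Nat.not_odd_iff_even] at hcon
        obtain ⟨r, hr⟩ := hcon.2
        exact h ⟨by omega, hcon.2⟩
      rcases this with h0 | hodd
      · rw [h0]
        norm_num
      · rw [zero_pow hodd.pos.ne', hodd.neg_pow]
        ring
    · rcases not_and_or.mp hle with hlt | hlt
      · rw [Nat.choose_eq_zero_of_lt (show p < ij.1 by omega)]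
        simp
      · rw [Nat.choose_eq_zero_of_lt (show q < ij.2 by omega)]
        simp

/-- The left-hand side expression as a function of `f`. -/
noncomputable def Lfun (m : ℕ) (f : R2) : R2 :=
  Polynomial.coeff
      (MvPolynomial.aeval
          ![Polynomial.C (MvPolynomial.X 0) * Polynomial.X + 2,
            Polynomial.C (MvPolynomial.X 1) * Polynomial.X + 2] f
        + MvPolynomial.aeval
          ![Polynomial.C (MvPolynomial.X 0) * Polynomial.X - 2,
            Polynomial.C (MvPolynomial.X 1) * Polynomial.X - 2] f
        - 2 * MvPolynomial.aeval
          ![Polynomial.C (MvPolynomial.X 0) * Polynomial.X,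
            Polynomial.C (MvPolynomial.X 1) * Polynomial.X] f) m

lemma Lfun_sum {ι : Type*} (m : ℕ) (s : Finset ι) (g : ι → R2) :
    Lfun m (∑ i ∈ s, g i) = ∑ i ∈ s, Lfun m (g i) := by
  simp only [Lfun, map_sum]
  rw [Finset.mul_sum, ← Finset.sum_add_distrib, ← Finset.sum_sub_distrib,
    Polynomial.finset_sum_coeff]

lemma mono_lhs (p q m : ℕ) (c : ℚ) :
    Lfun m (MvPolynomial.monomial (Finsupp.single 0 p + Finsupp.single 1 q) c)
    = if m + 2 ≤ p + q ∧ Even (p + q - m) then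
        MvPolynomial.C ((2 : ℚ) ^ (1 + (p + q) - m) * c) * phiPoly p q m
      else 0 := by
  have hv : ![Polynomial.C (MvPolynomial.X 0) * Polynomial.X + Polynomial.C (0 : R2),
      Polynomial.C (MvPolynomial.X 1) * Polynomial.X + Polynomial.C (0 : R2)]
      = ![Polynomial.C (MvPolynomial.X 0) * Polynomial.X,
          Polynomial.C (MvPolynomial.X 1) * Polynomial.X] := by
    funext i
    fin_cases i <;> simp
  rw [Lfun, ← hv]
  rw [show (2 : Polynomial R2) = Polynomial.C (2 : R2) from (map_ofNat _ 2).symm]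
  rw [sub_eq_add_neg (Polynomial.C (MvPolynomial.X 0) * Polynomial.X),
    sub_eq_add_neg (Polynomial.C (MvPolynomial.X 1) * Polynomial.X), ← map_neg]
  rw [aeval_mono, aeval_mono, aeval_mono]
  rw [Polynomial.coeff_sub, Polynomial.coeff_add, Polynomial.coeff_C_mul,
    Polynomial.coeff_C_mul, Polynomial.coeff_C_mul, Polynomial.coeff_C_mul,
    coeff_mul_linPow, coeff_mul_linPow, coeff_mul_linPow]
  rw [← mul_add (MvPolynomial.C c), mul_left_comm ((2 : R2)), ← mul_sub (MvPolynomial.C c)]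
  rw [Finset.mul_sum, ← Finset.sum_add_distrib, ← Finset.sum_sub_distrib]
  have : ∀ ij ∈ antidiagonal m,
      (MvPolynomial.C ((p.choose ij.1 : ℚ) * (q.choose ij.2 : ℚ))
          * MvPolynomial.X 0 ^ ij.1 * MvPolynomial.X 1 ^ ij.2
          * (2 : R2) ^ (p - ij.1 + (q - ij.2))
        + MvPolynomial.C ((p.choose ij.1 : ℚ) * (q.choose ij.2 : ℚ))
          * MvPolynomial.X 0 ^ ij.1 * MvPolynomial.X 1 ^ ij.2
          * (-2 : R2) ^ (p - ij.1 + (q - ij.2))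
        - (2 : R2) * (MvPolynomial.C ((p.choose ij.1 : ℚ) * (q.choose ij.2 : ℚ))
          * MvPolynomial.X 0 ^ ij.1 * MvPolynomial.X 1 ^ ij.2
          * (0 : R2) ^ (p - ij.1 + (q - ij.2))))
      = MvPolynomial.C ((p.choose ij.1 : ℚ) * (q.choose ij.2 : ℚ))
          * MvPolynomial.X 0 ^ ij.1 * MvPolynomial.X 1 ^ ij.2
          * ((2 : R2) ^ (p - ij.1 + (q - ij.2)) + (-2 : R2) ^ (p - ij.1 + (q - ij.2))
              - 2 * (0 : R2) ^ (p - ij.1 + (q - ij.2))) := by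
    intro ij _
    ring
  rw [Finset.sum_congr rfl this, mono_eval]
  split_ifs with h
  · rw [map_mul]
    ring
  · simp

lemma mono_rhs (p q m N : ℕ) (c : ℚ) (hN : p + q ≤ N) :
    (∑ k ∈ Finset.range (N + 1),
      if m + 2 ≤ k ∧ Even (k - m) then
        ∑ pq ∈ Finset.HasAntidiagonal.antidiagonal k,
          MvPolynomial.C
              ((2 : ℚ) ^ (1 + k - m) *
                MvPolynomial.coeff
                  (Finsupp.single (0 : Fin 2) pq.1 + Finsupp.single (1 : Fin 2) pq.2)
                  (MvPolynomial.monomial (Finsupp.single 0 p + Finsupp.single 1 q) c))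
            * phiPoly pq.1 pq.2 m
      else 0)
    = if m + 2 ≤ p + q ∧ Even (p + q - m) then
        MvPolynomial.C ((2 : ℚ) ^ (1 + (p + q) - m) * c) * phiPoly p q m
      else 0 := by
  rw [Finset.sum_eq_single (p + q)]
  · split_ifs with h
    · rw [Finset.sum_eq_single (p, q)]
      · rw [MvPolynomial.coeff_monomial, if_pos rfl]
      · intro pq _ hpq
        rw [MvPolynomial.coeff_monomial, if_neg, mul_zero, map_zero, zero_mul]
        intro hh
        obtain ⟨h1, h2⟩ := single_inj hh
        exact hpq (by rw [Prod.ext_iff]; exact ⟨h1.symm, h2.symm⟩)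
      · intro hmem
        simp at hmem
    · rfl
  · intro b _ hb
    split_ifs with h
    · refine Finset.sum_eq_zero fun pq hpq => ?_
      have : pq.1 + pq.2 = b := Finset.HasAntidiagonal.mem_antidiagonal.mp hpq
      rw [MvPolynomial.coeff_monomial, if_neg, mul_zero, map_zero, zero_mul]
      intro hh
      obtain ⟨h1, h2⟩ := single_inj hh
      omega
    · rfl
  · intro hmem
    exact absurd (Finset.mem_range.mpr (by omega)) hmem

lemma main_general (f : R2) (m N : ℕ) (hN : f.totalDegree ≤ N) :
    Lfun m f
    = ∑ k ∈ Finset.range (N + 1),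
        if m + 2 ≤ k ∧ Even (k - m) then
          ∑ pq ∈ Finset.HasAntidiagonal.antidiagonal k,
            MvPolynomial.C
                ((2 : ℚ) ^ (1 + k - m) *
                  MvPolynomial.coeff
                    (Finsupp.single (0 : Fin 2) pq.1 +
                      Finsupp.single (1 : Fin 2) pq.2) f)
              * phiPoly pq.1 pq.2 m
        else 0 := by
  conv_lhs => rw [MvPolynomial.as_sum f]
  rw [Lfun_sum]
  have step : ∀ d ∈ f.support,
      Lfun m (MvPolynomial.monomial d (MvPolynomial.coeff d f))
      = ∑ k ∈ Finset.range (N + 1),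
          if m + 2 ≤ k ∧ Even (k - m) then
            ∑ pq ∈ Finset.HasAntidiagonal.antidiagonal k,
              MvPolynomial.C
                  ((2 : ℚ) ^ (1 + k - m) *
                    MvPolynomial.coeff
                      (Finsupp.single (0 : Fin 2) pq.1 + Finsupp.single (1 : Fin 2) pq.2)
                      (MvPolynomial.monomial d (MvPolynomial.coeff d f)))
                * phiPoly pq.1 pq.2 m
          else 0 := by
    intro d hd
    have hb : d 0 + d 1 ≤ N := by
      have h1 := MvPolynomial.le_totalDegree hd
      have h2 : (d.sum fun _ e => e) = d 0 + d 1 := by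
        conv_lhs => rw [fin2_decomp d]
        exact degree_sum_eq _ _
      omega
    conv_lhs => rw [fin2_decomp d]
    conv_rhs => rw [fin2_decomp d]
    rw [mono_lhs, ← mono_rhs (d 0) (d 1) m N _ hb]
  rw [Finset.sum_congr rfl step, Finset.sum_comm]
  refine Finset.sum_congr rfl fun k _ => ?_
  by_cases hcond : m + 2 ≤ k ∧ Even (k - m)
  · simp only [if_pos hcond]
    rw [Finset.sum_comm]
    refine Finset.sum_congr rfl fun pq _ => ?_
    rw [← Finset.sum_mul]
    congr 1
    rw [← map_sum, ← Finset.mul_sum, ← MvPolynomial.coeff_sum, ← MvPolynomial.as_sum]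
  · simp only [if_neg hcond, Finset.sum_const_zero]

end CoeffExtractAux

/-- Two-variable coefficient extraction identity from the proof of Theorem 5.2:
for `f ∈ ℚ[u,z]` (variable `0` = first slot, variable `1` = second slot),
the coefficient of `r^m` in `f(ur+2, zr+2) + f(ur−2, zr−2) − 2 f(ur, zr)`
equals `∑_{k ≥ m+2, k ≡ m (2)} 2^{1+k−m} ∑_{p+q=k} φ_{p,q,m}(u,z) c_{p,q}`,
where `c_{p,q}` is the coefficient of `u^p z^q` in `f(u,z)`.  The sum over `k`
is truncated at the total degree of `f`, beyond which all `c_{p,q}` with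
`p + q = k` vanish. -/
theorem coeff_extraction_shifted_bipartite (f : MvPolynomial (Fin 2) ℚ) (m : ℕ) :
    (Polynomial.coeff
        (MvPolynomial.aeval
            ![Polynomial.C (MvPolynomial.X 0) * Polynomial.X + 2,
              Polynomial.C (MvPolynomial.X 1) * Polynomial.X + 2] f
          + MvPolynomial.aeval
            ![Polynomial.C (MvPolynomial.X 0) * Polynomial.X - 2,
              Polynomial.C (MvPolynomial.X 1) * Polynomial.X - 2] f
          - 2 * MvPolynomial.aeval
            ![Polynomial.C (MvPolynomial.X 0) * Polynomial.X,
              Polynomial.C (MvPolynomial.X 1) * Polynomial.X] f) m) =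
      ∑ k ∈ Finset.range (f.totalDegree + 1),
        if m + 2 ≤ k ∧ Even (k - m) then
          ∑ pq ∈ Finset.HasAntidiagonal.antidiagonal k,
            MvPolynomial.C
                ((2 : ℚ) ^ (1 + k - m) *
                  MvPolynomial.coeff
                    (Finsupp.single (0 : Fin 2) pq.1 +
                      Finsupp.single (1 : Fin 2) pq.2) f)
              * phiPoly pq.1 pq.2 m
        else 0 :=
  CoeffExtractAux.main_general f m _ le_rfl
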